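/- Let d ≥ 1, let K ⊂ ℝ^d be compact, and let ψ : ℝ^d → ℝ be continuously differentiable on an open set containing K. Let I be a countable type, ι : I → ℝ^d a family of increment vectors, and w : ℝ^d → I → ℝ a family of nonnegative weights such that: (i) there is C < ∞ with ∑'_i (‖ι i‖₁ + 1)² * w z i ≤ C for every z ∈ K; and (ii) there is L < ∞ such that for every integer N ≥ 1, every z ∈ K and every i ∈ I, |ψ(z + (1/N) • ι i) − ψ(z)| ≤ L * ‖ι i‖₁ / N. Then sup_{z ∈ K} | N * ∑'_i w z i * (ψ(z + (1/N) • ι i) − ψ(z)) − ∑'_i w z i * (fderiv ψ z)(ι i) | tends to 0 as N → ∞. -/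

import Mathlib

open BigOperators Filter Metric

set_option maxHeartbeats 1000000

private lemma norm_le_l1 {d : ℕ} (v : Fin d → ℝ) : ‖v‖ ≤ ∑ j, |v j| := by
  refine (pi_norm_le_iff_of_nonneg (Finset.sum_nonneg fun j _ => abs_nonneg _)).2 fun j => ?_
  rw [Real.norm_eq_abs]
  exact Finset.single_le_sum (f := fun j => |v j|) (fun i _ => abs_nonneg _) (Finset.mem_univ j)

/-- Uniform convergence of the rescaled discrete generator to the transport operator
(the analytic core of Proposition 4.4 of the paper): under the uniform ℓ² bound (A1) on
the weights and the Lipschitz property of `ψ`, the quantity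
`N ∑'_i w z i (ψ(z + ι i / N) - ψ(z))` converges to `∑'_i w z i ⟨ι i, ∇ψ(z)⟩`
uniformly for `z` in the compact set `K`.  Here `‖v‖₁ = ∑ j, |v j|` is the ℓ¹ norm. -/
theorem generator_uniform_convergence
    (d : ℕ) (hd : 1 ≤ d)
    (K : Set (Fin d → ℝ)) (hK : IsCompact K)
    (U : Set (Fin d → ℝ)) (hU : IsOpen U) (hKU : K ⊆ U)
    (ψ : (Fin d → ℝ) → ℝ) (hψ : ContDiffOn ℝ 1 ψ U)
    (I : Type*) [Countable I]
    (ι : I → (Fin d → ℝ))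
    (w : (Fin d → ℝ) → I → ℝ)
    (hw : ∀ z i, 0 ≤ w z i)
    (hsummable : ∀ z ∈ K,
      Summable (fun i => ((∑ j, |ι i j|) + 1) ^ 2 * w z i))
    (C : ℝ)
    (hC : ∀ z ∈ K, (∑' i, ((∑ j, |ι i j|) + 1) ^ 2 * w z i) ≤ C)
    (L : ℝ)
    (hL : ∀ N : ℕ, 1 ≤ N → ∀ z ∈ K, ∀ i : I,
      |ψ (z + ((N : ℝ))⁻¹ • ι i) - ψ z| ≤ L * (∑ j, |ι i j|) / N) :
    Tendsto
      (fun N : ℕ => ⨆ z : K,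
        |(N : ℝ) * ∑' i, w z i * (ψ ((z : Fin d → ℝ) + ((N : ℝ))⁻¹ • ι i) - ψ z)
          - ∑' i, w z i * (fderiv ℝ ψ z (ι i))|)
      atTop (nhds 0) := by
  classical
  rcases K.eq_empty_or_nonempty with hKe | hKne
  · have : IsEmpty K := by simp [hKe]
    simp only [Real.iSup_of_isEmpty]
    exact tendsto_const_nhds
  obtain ⟨z₀, hz₀⟩ := hKne
  have hCnn : 0 ≤ C :=
    le_trans (tsum_nonneg fun i => mul_nonneg (by positivity) (hw z₀ i)) (hC z₀ hz₀)
  -- a compact thickening of K inside U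
  obtain ⟨δ, hδ, hδU⟩ := hK.exists_cthickening_subset_open hU hKU
  set K' := cthickening δ K with hK'def
  have hK'c : IsCompact K' :=
    isCompact_of_isClosed_isBounded isClosed_cthickening hK.isBounded.cthickening
  have hKK' : K ⊆ K' := self_subset_cthickening K
  set f := fderiv ℝ ψ with hfdef
  have hfc : ContinuousOn f U := hψ.continuousOn_fderiv_of_isOpen hU le_rfl
  obtain ⟨M₀, hM₀⟩ := hK'c.exists_bound_of_continuousOn (hfc.mono hδU)
  set M := max M₀ 0 with hMdef
  have hMnn : (0:ℝ) ≤ M := le_max_right _ _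
  have hM : ∀ x ∈ K', ‖f x‖ ≤ M := fun x hx => (hM₀ x hx).trans (le_max_left _ _)
  set L' := max L 0 with hL'def
  have hL'nn : (0:ℝ) ≤ L' := le_max_right _ _
  have hdiff : ∀ x ∈ U, HasFDerivAt ψ (f x) x := fun x hx =>
    ((hψ.differentiableOn one_ne_zero).differentiableAt (hU.mem_nhds hx)).hasFDerivAt
  have hunif : UniformContinuousOn f K' :=
    hK'c.uniformContinuousOn_of_continuous (hfc.mono hδU)
  rw [Metric.tendsto_atTop]
  intro ε hε
  set ε' := ε / (2 * (C + 1)) with hε'def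
  have hε' : 0 < ε' := by positivity
  obtain ⟨η, hη, hηε⟩ := Metric.uniformContinuousOn_iff.mp hunif ε' hε'
  set r := min δ (η / 2) with hrdef
  have hr : 0 < r := lt_min hδ (by positivity)
  obtain ⟨N₁, hN₁⟩ := exists_nat_ge ((L' + M) / (r * ε'))
  refine ⟨max N₁ 1, fun N hN => ?_⟩
  have hN1 : 1 ≤ N := le_trans (le_max_right _ _) hN
  have hNN₁ : (N₁ : ℝ) ≤ N := by exact_mod_cast le_trans (le_max_left _ _) hN
  have hNpos : (0:ℝ) < N := by exact_mod_cast hN1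
  set q := (L' + M) / ((N:ℝ) * r) with hqdef
  have hqnn : 0 ≤ q := div_nonneg (add_nonneg hL'nn hMnn) (by positivity)
  have hq : L' + M = q * ((N:ℝ) * r) := (div_mul_cancel₀ _ (by positivity)).symm
  have hqε' : q ≤ ε' := by
    rw [hqdef, div_le_iff₀ (by positivity)]
    rw [div_le_iff₀ (by positivity)] at hN₁
    nlinarith [mul_le_mul_of_nonneg_right hNN₁ (mul_nonneg hr.le hε'.le)]
  set B := ε' + q with hBdef
  have hBnn : 0 ≤ B := add_nonneg hε'.le hqnn
  -- pointwise bound on each term of the series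
  have key : ∀ z ∈ K, ∀ i : I,
      |(N:ℝ) * (w z i * (ψ (z + ((N:ℝ))⁻¹ • ι i) - ψ z)) - w z i * f z (ι i)|
        ≤ B * (((∑ j, |ι i j|) + 1) ^ 2 * w z i) := by
    intro z hz i
    set a := ∑ j, |ι i j| with hadef
    have hann : 0 ≤ a := Finset.sum_nonneg fun j _ => abs_nonneg _
    have hnv : ‖ι i‖ ≤ a := norm_le_l1 (ι i)
    have hfactor : (N:ℝ) * (w z i * (ψ (z + ((N:ℝ))⁻¹ • ι i) - ψ z)) - w z i * f z (ι i)
        = w z i * ((N:ℝ) * (ψ (z + ((N:ℝ))⁻¹ • ι i) - ψ z) - f z (ι i)) := by ring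
    rw [hfactor, abs_mul, abs_of_nonneg (hw z i),
      show B * ((a + 1) ^ 2 * w z i) = w z i * (B * (a + 1) ^ 2) by ring]
    refine mul_le_mul_of_nonneg_left ?_ (hw z i)
    have hDbound : |(N:ℝ) * (ψ (z + ((N:ℝ))⁻¹ • ι i) - ψ z) - f z (ι i)| ≤ B * (a + 1) ^ 2 := by
      by_cases hcase : a ≤ (N:ℝ) * r
      · -- small increments: mean value estimate
        have hsub : closedBall z r ⊆ K' :=
          (closedBall_subset_closedBall (min_le_left _ _)).trans
            (closedBall_subset_cthickening hz δ)
        have hder : ∀ x ∈ closedBall z r, HasFDerivWithinAt ψ (f x) (closedBall z r) x :=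
          fun x hx => (hdiff x (hδU (hsub hx))).hasFDerivWithinAt
        have hbound : ∀ x ∈ closedBall z r, ‖f x - f z‖ ≤ ε' := by
          intro x hx
          have hdxz : dist x z < η :=
            lt_of_le_of_lt (mem_closedBall.mp hx)
              (lt_of_le_of_lt (min_le_right _ _) (by linarith))
          have := hηε x (hsub hx) z (hKK' hz) hdxz
          rw [dist_eq_norm] at this
          exact this.le
        have hsm : ‖((N:ℝ))⁻¹ • ι i‖ ≤ r := by
          rw [norm_smul, Real.norm_eq_abs, abs_of_nonneg (inv_nonneg.2 hNpos.le)]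
          rw [inv_mul_le_iff₀ hNpos]
          calc ‖ι i‖ ≤ a := hnv
            _ ≤ (N:ℝ) * r := hcase
        have hy : z + ((N:ℝ))⁻¹ • ι i ∈ closedBall z r := by
          rw [mem_closedBall, dist_eq_norm, add_sub_cancel_left]
          exact hsm
        have hmvt := (convex_closedBall z r).norm_image_sub_le_of_norm_hasFDerivWithin_le'
          hder hbound (mem_closedBall_self hr.le) hy
        rw [add_sub_cancel_left] at hmvt
        have hlin : f z (((N:ℝ))⁻¹ • ι i) = ((N:ℝ))⁻¹ * f z (ι i) := by
          rw [(f z).map_smul, smul_eq_mul]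
        rw [hlin] at hmvt
        have hD : (N:ℝ) * (ψ (z + ((N:ℝ))⁻¹ • ι i) - ψ z) - f z (ι i)
            = (N:ℝ) * ((ψ (z + ((N:ℝ))⁻¹ • ι i) - ψ z) - ((N:ℝ))⁻¹ * f z (ι i)) := by
          field_simp
        rw [hD, abs_mul, abs_of_nonneg hNpos.le]
        have h1 : |ψ (z + ((N:ℝ))⁻¹ • ι i) - ψ z - ((N:ℝ))⁻¹ * f z (ι i)|
            ≤ ε' * (((N:ℝ))⁻¹ * a) := by
          refine le_trans hmvt ?_
          rw [norm_smul, Real.norm_eq_abs, abs_of_nonneg (inv_nonneg.2 hNpos.le)]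
          exact mul_le_mul_of_nonneg_left (mul_le_mul_of_nonneg_left hnv (by positivity)) hε'.le
        have h2 : (N:ℝ) * |ψ (z + ((N:ℝ))⁻¹ • ι i) - ψ z - ((N:ℝ))⁻¹ * f z (ι i)|
            ≤ ε' * a := by
          calc (N:ℝ) * |ψ (z + ((N:ℝ))⁻¹ • ι i) - ψ z - ((N:ℝ))⁻¹ * f z (ι i)|
              ≤ (N:ℝ) * (ε' * (((N:ℝ))⁻¹ * a)) := mul_le_mul_of_nonneg_left h1 hNpos.le
            _ = ε' * a := by field_simp
        refine le_trans h2 ?_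
        nlinarith [mul_nonneg hqnn (sq_nonneg (a+1)), sq_nonneg a, hε'.le, hann]
      · -- large increments: crude bound
        push_neg at hcase
        have hψb : |ψ (z + ((N:ℝ))⁻¹ • ι i) - ψ z| ≤ L * a / N := hL N hN1 z hz i
        have h1 : |(N:ℝ) * (ψ (z + ((N:ℝ))⁻¹ • ι i) - ψ z)| ≤ L' * a := by
          rw [abs_mul, abs_of_nonneg hNpos.le]
          calc (N:ℝ) * |ψ (z + ((N:ℝ))⁻¹ • ι i) - ψ z| ≤ (N:ℝ) * (L * a / N) :=
              mul_le_mul_of_nonneg_left hψb hNpos.le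
            _ = L * a := by field_simp
            _ ≤ L' * a := mul_le_mul_of_nonneg_right (le_max_left _ _) hann
        have h2 : |f z (ι i)| ≤ M * a := by
          calc |f z (ι i)| ≤ ‖f z‖ * ‖ι i‖ := (f z).le_opNorm (ι i)
            _ ≤ M * a := mul_le_mul (hM z (hKK' hz)) hnv (norm_nonneg _) hMnn
        have h3 : |(N:ℝ) * (ψ (z + ((N:ℝ))⁻¹ • ι i) - ψ z) - f z (ι i)| ≤ (L' + M) * a :=
          le_trans (abs_sub _ _) (by linarith)
        refine le_trans h3 ?_
        -- (L'+M) * a = q * (N r) * a ≤ q * a^2 ≤ q * (a+1)^2 ≤ B * (a+1)^2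
        rw [hq]
        nlinarith [mul_nonneg hqnn hann, mul_nonneg (mul_nonneg hqnn hann) hann,
          mul_nonneg hε'.le (sq_nonneg (a+1)), mul_le_mul_of_nonneg_left hcase.le hqnn,
          mul_nonneg hqnn (mul_nonneg hNpos.le hr.le)]
    exact hDbound
  -- bound on the total for each z in K
  have hbound_sup : ∀ z ∈ K,
      |(N:ℝ) * ∑' i, w z i * (ψ (z + ((N:ℝ))⁻¹ • ι i) - ψ z) - ∑' i, w z i * f z (ι i)|
        ≤ B * C := by
    intro z hz
    have hsum2 : Summable (fun i => ((∑ j, |ι i j|) + 1) ^ 2 * w z i) := hsummable z hz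
    have hS1 : Summable (fun i => (N:ℝ) * (w z i * (ψ (z + ((N:ℝ))⁻¹ • ι i) - ψ z))) := by
      refine Summable.of_norm_bounded (hsum2.mul_left L') fun i => ?_
      set a := ∑ j, |ι i j| with hadef
      have hann : 0 ≤ a := Finset.sum_nonneg fun j _ => abs_nonneg _
      have hψb : |ψ (z + ((N:ℝ))⁻¹ • ι i) - ψ z| ≤ L * a / N := hL N hN1 z hz i
      rw [Real.norm_eq_abs, abs_mul, abs_mul, abs_of_nonneg hNpos.le, abs_of_nonneg (hw z i)]
      have : (N:ℝ) * (w z i * |ψ (z + ((N:ℝ))⁻¹ • ι i) - ψ z|) ≤ (N:ℝ) * (w z i * (L * a / N)) :=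
        mul_le_mul_of_nonneg_left (mul_le_mul_of_nonneg_left hψb (hw z i)) hNpos.le
      refine le_trans this ?_
      have heq : (N:ℝ) * (w z i * (L * a / N)) = L * a * w z i := by field_simp
      rw [heq]
      have h4 : L * a ≤ L' * (a + 1) ^ 2 := by
        have : L ≤ L' := le_max_left _ _
        nlinarith [mul_le_mul_of_nonneg_right this hann,
          mul_nonneg hL'nn (show (0:ℝ) ≤ a ^ 2 + a + 1 by positivity),
          mul_nonneg (sub_nonneg.2 this) hann]
      calc L * a * w z i ≤ L' * (a + 1) ^ 2 * w z i := mul_le_mul_of_nonneg_right h4 (hw z i)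
        _ = L' * ((a + 1) ^ 2 * w z i) := by ring
    have hS2 : Summable (fun i => w z i * f z (ι i)) := by
      refine Summable.of_norm_bounded (hsum2.mul_left M) fun i => ?_
      set a := ∑ j, |ι i j| with hadef
      have hann : 0 ≤ a := Finset.sum_nonneg fun j _ => abs_nonneg _
      rw [Real.norm_eq_abs, abs_mul, abs_of_nonneg (hw z i)]
      have h2 : |f z (ι i)| ≤ M * a :=
        le_trans ((f z).le_opNorm (ι i))
          (mul_le_mul (hM z (hKK' hz)) (norm_le_l1 (ι i)) (norm_nonneg _) hMnn)
      calc w z i * |f z (ι i)| ≤ w z i * (M * a) := mul_le_mul_of_nonneg_left h2 (hw z i)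
        _ ≤ M * ((a + 1) ^ 2 * w z i) := by
            nlinarith [mul_nonneg (mul_nonneg hMnn (hw z i))
              (show (0:ℝ) ≤ a ^ 2 + a + 1 by positivity)]
    rw [show (N:ℝ) * ∑' i, w z i * (ψ (z + ((N:ℝ))⁻¹ • ι i) - ψ z)
        = ∑' i, (N:ℝ) * (w z i * (ψ (z + ((N:ℝ))⁻¹ • ι i) - ψ z)) from tsum_mul_left.symm,
      ← Summable.tsum_sub hS1 hS2]
    have habs_summable : Summable (fun i =>
        ‖(N:ℝ) * (w z i * (ψ (z + ((N:ℝ))⁻¹ • ι i) - ψ z)) - w z i * f z (ι i)‖) := by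
      refine Summable.of_nonneg_of_le (fun i => norm_nonneg _) (fun i => ?_)
        (hsum2.mul_left B)
      rw [Real.norm_eq_abs]
      exact key z hz i
    rw [← Real.norm_eq_abs]
    calc ‖∑' i, ((N:ℝ) * (w z i * (ψ (z + ((N:ℝ))⁻¹ • ι i) - ψ z)) - w z i * f z (ι i))‖
        ≤ ∑' i, ‖(N:ℝ) * (w z i * (ψ (z + ((N:ℝ))⁻¹ • ι i) - ψ z)) - w z i * f z (ι i)‖ :=
          norm_tsum_le_tsum_norm habs_summable
      _ ≤ ∑' i, B * (((∑ j, |ι i j|) + 1) ^ 2 * w z i) := by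
          refine Summable.tsum_le_tsum (fun i => ?_) habs_summable (hsum2.mul_left B)
          rw [Real.norm_eq_abs]
          exact key z hz i
      _ = B * ∑' i, ((∑ j, |ι i j|) + 1) ^ 2 * w z i := tsum_mul_left
      _ ≤ B * C := mul_le_mul_of_nonneg_left (hC z hz) hBnn
  -- conclude
  have : Nonempty K := ⟨⟨z₀, hz₀⟩⟩
  set F := fun z : K =>
    |(N:ℝ) * ∑' i, w z i * (ψ ((z : Fin d → ℝ) + ((N:ℝ))⁻¹ • ι i) - ψ z)
      - ∑' i, w z i * (fderiv ℝ ψ z (ι i))| with hFdef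
  have hub : ∀ z : K, F z ≤ B * C := fun z => hbound_sup z z.2
  have hbdd : BddAbove (Set.range F) := ⟨B * C, by rintro x ⟨z, rfl⟩; exact hub z⟩
  have hsup_le : (⨆ z : K, F z) ≤ B * C := ciSup_le hub
  have hsup_nn : 0 ≤ ⨆ z : K, F z :=
    le_trans (abs_nonneg _) (le_ciSup hbdd ⟨z₀, hz₀⟩)
  rw [Real.dist_eq, sub_zero, abs_of_nonneg hsup_nn]
  calc (⨆ z : K, F z) ≤ B * C := hsup_le
    _ ≤ (ε' + ε') * C := mul_le_mul_of_nonneg_right (by linarith) hCnn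
    _ = ε * (C / (C + 1)) := by rw [hε'def]; field_simp; ring
    _ < ε * 1 := by
        refine mul_lt_mul_of_pos_left ?_ hε
        rw [div_lt_one (by positivity)]
        linarith
    _ = ε := mul_one ε
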